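/- No multi-stack visibly pushdown automaton recognizes {aⁿbⁿcⁿ | n ≥ 1}, regardless of the choice of K-stack call-return alphabet partitioning {a,b,c} (with pairwise disjoint call, return and internal alphabets). -/

import Mathlib

/-- The *kind* of a letter in a `K`-stack call-return alphabet: a call of some
stack `s`, a return of some stack `s`, or an internal action. -/
inductive CRKind (K : ℕ) where
  | call (s : Fin K)
  | ret (s : Fin K)
  | int

/-- A `K`-stack call-return alphabet over the letters `A`: every letter is
(exclusively) a call of one stack, a return of one stack, or internal.  This
encodes the pairwise disjointness of the collection
`⟨{(Σ_c^s, Σ_r^s)}_{s∈[K]}, Σ_int⟩` together with `Σ` being their union. -/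
structure CRAlphabet (K : ℕ) (A : Type) where
  kind : A → CRKind K

namespace CRAlphabet

variable {K : ℕ} {A : Type}

def callSet (h : CRAlphabet K A) (s : Fin K) : Set A := {a | h.kind a = .call s}
def retSet (h : CRAlphabet K A) (s : Fin K) : Set A := {a | h.kind a = .ret s}
def intSet (h : CRAlphabet K A) : Set A := {a | h.kind a = .int}

end CRAlphabet

/-- `s`-well-formed strings: generated by the grammar
`A ::= aAb | AA | ε | c` with `a ∈ c`, `b ∈ r`, `c ∉ c ∪ r`. -/
inductive SWellFormed {A : Type} (c r : Set A) : List A → Prop where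
  | nil : SWellFormed c r []
  | single {x : A} : x ∉ c → x ∉ r → SWellFormed c r [x]
  | wrap {a b : A} {u : List A} : a ∈ c → b ∈ r → SWellFormed c r u →
      SWellFormed c r (a :: u ++ [b])
  | concat {u v : List A} : SWellFormed c r u → SWellFormed c r v →
      SWellFormed c r (u ++ v)

/-- The matching relation `μ^s` of the nested word determined by the string
`w` (positions `0`-based): `(i,j) ∈ μ^s` iff `i < j`, `λ(i) ∈ Σ_c^s`,
`λ(j) ∈ Σ_r^s` and `λ(i+1) … λ(j-1)` is `s`-well formed. -/
def Matched {K : ℕ} {A : Type} (h : CRAlphabet K A) (w : List A) (s : Fin K)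
    (i j : ℕ) : Prop :=
  i < j ∧ j < w.length ∧
  (∃ a, w[i]? = some a ∧ a ∈ h.callSet s) ∧
  (∃ b, w[j]? = some b ∧ b ∈ h.retSet s) ∧
  SWellFormed (h.callSet s) (h.retSet s) ((w.take j).drop (i + 1))

/-- The full matching relation `μ = ⋃_s μ^s`. -/
def MuAny {K : ℕ} {A : Type} (h : CRAlphabet K A) (w : List A) (i j : ℕ) : Prop :=
  ∃ s, Matched h w s i j

/-- A multi-stack visibly pushdown automaton over a `K`-stack call-return
alphabet, with states `Q` and stack alphabet `Γ` (the bottom symbol `⊥` is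
represented implicitly: a stack contents is a list over `Γ`, the empty list
standing for the stack containing only `⊥`; in pop transitions the stack
symbol `none` stands for `⊥`). -/
structure MVPA (K : ℕ) (A Q Γ : Type) where
  pushT : Q → A → Γ → Q → Prop
  popT : Q → A → Option Γ → Q → Prop
  intT : Q → A → Q → Prop
  qI : Set Q
  qF : Set Q

/-- One step of the MVPA `M` reading letter `a`, from configuration `c` to
configuration `c'` (a configuration is a state together with one stack
contents per stack). -/
def vStep {K : ℕ} {A Q Γ : Type} (h : CRAlphabet K A) (M : MVPA K A Q Γ)
    (a : A) (c c' : Q × (Fin K → List Γ)) : Prop :=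
  (∃ s, h.kind a = .call s ∧ ∃ g, M.pushT c.1 a g c'.1 ∧
     c'.2 s = g :: c.2 s ∧ ∀ t, t ≠ s → c'.2 t = c.2 t) ∨
  (∃ s, h.kind a = .ret s ∧ (∀ t, t ≠ s → c'.2 t = c.2 t) ∧
     ((∃ g, M.popT c.1 a (some g) c'.1 ∧ c.2 s = g :: c'.2 s) ∨
      (M.popT c.1 a none c'.1 ∧ c.2 s = [] ∧ c'.2 s = []))) ∨
  (h.kind a = .int ∧ M.intT c.1 a c'.1 ∧ c'.2 = c.2)

/-- The MVPA `M` accepts the string `w`: some run starting in an initial state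
with all stacks empty and ending in a final state. -/
def vAccepts {K : ℕ} {A Q Γ : Type} (h : CRAlphabet K A) (M : MVPA K A Q Γ)
    (w : List A) : Prop :=
  ∃ f : ℕ → Q × (Fin K → List Γ),
    (f 0).1 ∈ M.qI ∧ (∀ s, (f 0).2 s = []) ∧
    (∀ i a, w[i]? = some a → vStep h M a (f i) (f (i + 1))) ∧
    (f w.length).1 ∈ M.qF

/-- The language of the MVPA `M` (nonempty strings, identified with their
nested words). -/
def vLang {K : ℕ} {A Q Γ : Type} (h : CRAlphabet K A) (M : MVPA K A Q Γ) :
    Set (List A) :=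
  {w | w ≠ [] ∧ vAccepts h M w}

/-- The three-letter alphabet `{a, b, c}`. -/
inductive L3abc where
  | a | b | c
deriving DecidableEq
namespace Stmt11Aux

variable {K : ℕ} {A Q Γ : Type} {h : CRAlphabet K A} {M : MVPA K A Q Γ}

lemma step_call {a : A} {s : Fin K} {c c' : Q × (Fin K → List Γ)}
    (hk : h.kind a = .call s) (hs : vStep h M a c c') :
    (∃ g, M.pushT c.1 a g c'.1 ∧ c'.2 s = g :: c.2 s) ∧ ∀ t, t ≠ s → c'.2 t = c.2 t := by
  rcases hs with ⟨s', hk', g, hp, he, ho⟩ | ⟨s', hk', _, _⟩ | ⟨hk', _, _⟩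
  · cases hk.symm.trans hk'
    exact ⟨⟨g, hp, he⟩, ho⟩
  · cases hk.symm.trans hk'
  · cases hk.symm.trans hk'

lemma step_ret {a : A} {s : Fin K} {c c' : Q × (Fin K → List Γ)}
    (hk : h.kind a = .ret s) (hs : vStep h M a c c') :
    (∀ t, t ≠ s → c'.2 t = c.2 t) ∧
      ((∃ g, M.popT c.1 a (some g) c'.1 ∧ c.2 s = g :: c'.2 s) ∨
       (M.popT c.1 a none c'.1 ∧ c.2 s = [] ∧ c'.2 s = [])) := by
  rcases hs with ⟨s', hk', _⟩ | ⟨s', hk', ho, hrest⟩ | ⟨hk', _, _⟩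
  · cases hk.symm.trans hk'
  · cases hk.symm.trans hk'
    exact ⟨ho, hrest⟩
  · cases hk.symm.trans hk'

lemma step_int {a : A} {c c' : Q × (Fin K → List Γ)}
    (hk : h.kind a = .int) (hs : vStep h M a c c') :
    M.intT c.1 a c'.1 ∧ c'.2 = c.2 := by
  rcases hs with ⟨s', hk', _⟩ | ⟨s', hk', _⟩ | ⟨hk', hi, he⟩
  · cases hk.symm.trans hk'
  · cases hk.symm.trans hk'
  · exact ⟨hi, he⟩

end Stmt11Aux
namespace Stmt11Aux

variable {K : ℕ} {A Q Γ : Type} {h : CRAlphabet K A} {M : MVPA K A Q Γ}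

lemma splice (w : List A) (f : ℕ → Q × (Fin K → List Γ))
    (h0I : (f 0).1 ∈ M.qI) (h0S : ∀ s, (f 0).2 s = [])
    (hstep : ∀ i a, w[i]? = some a → vStep h M a (f i) (f (i + 1)))
    (hF : (f w.length).1 ∈ M.qF)
    (p q : ℕ) (hpq : p ≤ q) (hq : q ≤ w.length)
    (hst : (f p).1 = (f q).1)
    (hstk : ∀ s : Fin K, (f p).2 s = (f q).2 s ∨
      ((∀ m, q ≤ m → m ≤ w.length → (f q).2 s <:+ (f m).2 s) ∧ (f p).2 s <:+ (f q).2 s)) :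
    vAccepts h M (w.take p ++ w.drop q) := by
  classical
  set d := q - p with hd
  have hpd : p + d = q := by omega
  -- the new stack contents
  set N : ℕ → Fin K → List Γ := fun m s =>
    if (f p).2 s = (f q).2 s then (f (m + d)).2 s
    else ((f (m + d)).2 s).take (((f (m + d)).2 s).length - ((f q).2 s).length) ++ (f p).2 s
    with hN
  -- key computation in the suffix case
  have hNY : ∀ m s (Y : List Γ), ¬ (f p).2 s = (f q).2 s →
      (f (m + d)).2 s = Y ++ (f q).2 s → N m s = Y ++ (f p).2 s := by
    intro m s Y hne hY
    simp only [hN, if_neg hne, hY, List.length_append, Nat.add_sub_cancel, List.take_left]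
  have hNp : ∀ s, N p s = (f p).2 s := by
    intro s
    by_cases hc : (f p).2 s = (f q).2 s
    · simp only [hN, if_pos hc, hpd, ← hc]
    · have := hNY p s [] hc (by simp [hpd])
      simpa using this
  set g : ℕ → Q × (Fin K → List Γ) := fun m =>
    if m < p then f m else ⟨(f (m + d)).1, N m⟩ with hg
  have hgform : ∀ m, p ≤ m → g m = ⟨(f (m + d)).1, N m⟩ := by
    intro m hm
    simp [hg, Nat.not_lt.mpr hm]
  have hgp : ∀ m, m ≤ p → g m = f m := by
    intro m hm
    rcases lt_or_eq_of_le hm with hm | hm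
    · simp [hg, hm]
    · subst hm
      rw [hgform m le_rfl]
      refine Prod.ext ?_ ?_
      · rw [hpd]; exact hst.symm
      · exact funext fun s => hNp s
  refine ⟨g, ?_, ?_, ?_, ?_⟩
  · rw [hgp 0 (Nat.zero_le p)]; exact h0I
  · rw [hgp 0 (Nat.zero_le p)]; exact h0S
  · intro m a hma
    have hm' : m < (w.take p ++ w.drop q).length := by
      by_contra hcon
      rw [List.getElem?_eq_none (Nat.le_of_not_lt hcon)] at hma
      cases hma
    have hlen' : (w.take p ++ w.drop q).length = p + (w.length - q) := by
      simp [List.length_take, List.length_drop]; omega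
    have htakelen : (w.take p).length = p := by
      simp [List.length_take]; omega
    by_cases hmp : m < p
    · -- inside the untouched prefix
      have hma' : w[m]? = some a := by
        rw [List.getElem?_append_left (by omega : m < (w.take p).length)] at hma
        simpa [List.getElem?_take, hmp] using hma
      rw [hgp m (by omega), hgp (m + 1) (by omega)]
      exact hstep m a hma'
    · push_neg at hmp
      have hma' : w[m + d]? = some a := by
        rw [List.getElem?_append_right (by omega : (w.take p).length ≤ m)] at hma
        rw [List.getElem?_drop] at hma
        rw [htakelen] at hma
        have : q + (m - p) = m + d := by omega
        rwa [this] at hma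
      have hmd : m + d < w.length := by
        by_contra hcon
        rw [List.getElem?_eq_none (Nat.le_of_not_lt hcon)] at hma'
        cases hma'
      have hs := hstep (m + d) a hma'
      have hidx : m + 1 + d = m + d + 1 := by omega
      rw [hgform m hmp, hgform (m + 1) (by omega), hidx]
      have hNeq : ∀ t, (f (m + d + 1)).2 t = (f (m + d)).2 t → N (m + 1) t = N m t := by
        intro t he
        by_cases hc : (f p).2 t = (f q).2 t
        · simp only [hN, if_pos hc, hidx, he]
        · simp only [hN, if_neg hc, hidx, he]
      rcases hs with ⟨s, hk, g0, hpush, he, ho⟩ | ⟨s, hk, ho, hrest⟩ | ⟨hk, hint, he⟩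
      · -- push on stack s
        refine Or.inl ⟨s, hk, g0, hpush, ?_, fun t ht => hNeq t (ho t ht)⟩
        show N (m + 1) s = g0 :: N m s
        by_cases hc : (f p).2 s = (f q).2 s
        · simp only [hN, if_pos hc, hidx, he]
        · obtain ⟨hsuf, _⟩ := (hstk s).resolve_left hc
          obtain ⟨Y, hY⟩ := hsuf (m + d) (by omega) (by omega)
          have hY0 : (f (m + d)).2 s = Y ++ (f q).2 s := hY.symm
          have hY1 : (f (m + 1 + d)).2 s = (g0 :: Y) ++ (f q).2 s := by
            rw [hidx, he, hY0]; rfl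
          rw [hNY (m + 1) s (g0 :: Y) hc hY1, hNY m s Y hc hY0]
          rfl
      · -- pop on stack s
        refine Or.inr (Or.inl ⟨s, hk, fun t ht => hNeq t (ho t ht), ?_⟩)
        rcases hrest with ⟨g0, hpop, he⟩ | ⟨hpop, he1, he2⟩
        · -- genuine pop
          refine Or.inl ⟨g0, hpop, ?_⟩
          show N m s = g0 :: N (m + 1) s
          by_cases hc : (f p).2 s = (f q).2 s
          · simp only [hN, if_pos hc, hidx, he]
          · obtain ⟨hsuf, _⟩ := (hstk s).resolve_left hc
            obtain ⟨Y, hY⟩ := hsuf (m + d + 1) (by omega) (by omega)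
            have hY1 : (f (m + 1 + d)).2 s = Y ++ (f q).2 s := by rw [hidx]; exact hY.symm
            have hY0 : (f (m + d)).2 s = (g0 :: Y) ++ (f q).2 s := by
              rw [he, ← hY]; rfl
            rw [hNY (m + 1) s Y hc hY1, hNY m s (g0 :: Y) hc hY0]
            rfl
        · -- pop on empty stack
          refine Or.inr ⟨hpop, ?_, ?_⟩
          · show N m s = []
            by_cases hc : (f p).2 s = (f q).2 s
            · simp only [hN, if_pos hc, he1]
            · obtain ⟨hsuf, hpq'⟩ := (hstk s).resolve_left hc
              have hbase : (f q).2 s = [] := by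
                have := hsuf (m + d) (by omega) (by omega)
                rw [he1] at this
                exact List.suffix_nil.mp this
              have hfp : (f p).2 s = [] := by
                rw [hbase] at hpq'
                exact List.suffix_nil.mp hpq'
              rw [hNY m s [] hc (by rw [he1, hbase]; rfl), hfp]
              rfl
          · show N (m + 1) s = []
            by_cases hc : (f p).2 s = (f q).2 s
            · simp only [hN, if_pos hc, hidx, he2]
            · obtain ⟨hsuf, hpq'⟩ := (hstk s).resolve_left hc
              have hbase : (f q).2 s = [] := by
                have := hsuf (m + d) (by omega) (by omega)
                rw [he1] at this
                exact List.suffix_nil.mp this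
              have hfp : (f p).2 s = [] := by
                rw [hbase] at hpq'
                exact List.suffix_nil.mp hpq'
              rw [hNY (m + 1) s [] hc (by rw [hidx, he2, hbase]; rfl), hfp]
              rfl
      · -- internal
        refine Or.inr (Or.inr ⟨hk, hint, ?_⟩)
        exact funext fun t => hNeq t (by rw [he])
  · -- final state
    have hlen : (w.take p ++ w.drop q).length = w.length - d := by
      simp [List.length_take, List.length_drop]; omega
    rw [hlen, hgform _ (by omega)]
    have : w.length - d + d = w.length := by omega
    rw [this]
    exact hF

end Stmt11Aux
namespace Stmt11Aux

variable {K : ℕ} {A Q Γ : Type} {h : CRAlphabet K A} {M : MVPA K A Q Γ}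
variable {w : List A} {f : ℕ → Q × (Fin K → List Γ)}

lemma exists_letter (m : ℕ) (hm : m < w.length) : ∃ x, w[m]? = some x :=
  ⟨w[m], List.getElem?_eq_getElem hm⟩

lemma stack_empty_upto
    (hstep : ∀ i a, w[i]? = some a → vStep h M a (f i) (f (i + 1)))
    (s : Fin K) (hi : ℕ) (hhi : hi ≤ w.length)
    (hnc : ∀ k, k < hi → ∀ x, w[k]? = some x → h.kind x ≠ .call s)
    (h0 : (f 0).2 s = []) :
    ∀ m, m ≤ hi → (f m).2 s = [] := by
  intro m
  induction m with
  | zero => intro _; exact h0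
  | succ m ih =>
    intro hm
    have ihm := ih (by omega)
    obtain ⟨x, hx⟩ := exists_letter m (show m < w.length by omega)
    have hst := hstep m x hx
    rcases hkx : h.kind x with t | t | _
    · have hts : t ≠ s := by rintro rfl; exact hnc m (by omega) x hx hkx
      rw [(step_call hkx hst).2 s (fun hh => hts hh.symm)]; exact ihm
    · rcases step_ret hkx hst with ⟨ho, hre⟩
      by_cases hts : t = s
      · subst hts
        rcases hre with ⟨g, _, hg⟩ | ⟨_, _, h2⟩
        · rw [ihm] at hg; exact absurd hg (by simp)
        · exact h2
      · rw [ho s (fun hh => hts hh.symm)]; exact ihm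
    · rw [congrFun (step_int hkx hst).2 s]; exact ihm

lemma stacks_const_int
    (hstep : ∀ i a, w[i]? = some a → vStep h M a (f i) (f (i + 1)))
    (lo hi : ℕ) (hhi : hi ≤ w.length)
    (hint : ∀ k, lo ≤ k → k < hi → ∀ x, w[k]? = some x → h.kind x = .int) :
    ∀ m, lo ≤ m → m ≤ hi → (f m).2 = (f lo).2 := by
  intro m
  induction m with
  | zero =>
    intro h1 _
    have h0 : lo = 0 := by omega
    rw [h0]
  | succ m ih =>
    intro h1 h2
    by_cases hlo : lo ≤ m
    · have ihm := ih hlo (by omega)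
      obtain ⟨x, hx⟩ := exists_letter m (show m < w.length by omega)
      rw [(step_int (hint m hlo (by omega) x hx) (hstep m x hx)).2, ihm]
    · have hx1 : lo = m + 1 := by omega
      rw [hx1]

lemma stacks_const_retEmpty
    (hstep : ∀ i a, w[i]? = some a → vStep h M a (f i) (f (i + 1)))
    (s : Fin K) (lo hi : ℕ) (hhi : hi ≤ w.length)
    (hret : ∀ k, lo ≤ k → k < hi → ∀ x, w[k]? = some x → h.kind x = .ret s)
    (hemp : (f lo).2 s = []) :
    ∀ m, lo ≤ m → m ≤ hi → (f m).2 = (f lo).2 := by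
  intro m
  induction m with
  | zero =>
    intro h1 _
    have h0 : lo = 0 := by omega
    rw [h0]
  | succ m ih =>
    intro h1 h2
    by_cases hlo : lo ≤ m
    · have ihm := ih hlo (by omega)
      obtain ⟨x, hx⟩ := exists_letter m (show m < w.length by omega)
      rcases step_ret (hret m hlo (by omega) x hx) (hstep m x hx) with ⟨ho, hre⟩
      have hms : (f m).2 s = [] := by rw [ihm]; exact hemp
      rcases hre with ⟨g, _, hg⟩ | ⟨_, _, h2'⟩
      · rw [hms] at hg; exact absurd hg (by simp)
      · funext t
        by_cases hts : t = s
        · subst hts; rw [h2', hemp]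
        · rw [ho t hts, congrFun ihm t]
    · have hx1 : lo = m + 1 := by omega
      rw [hx1]

lemma stack_mono
    (hstep : ∀ i a, w[i]? = some a → vStep h M a (f i) (f (i + 1)))
    (s : Fin K) (lo hi : ℕ) (hhi : hi ≤ w.length)
    (hnr : ∀ k, lo ≤ k → k < hi → ∀ x, w[k]? = some x → h.kind x ≠ .ret s) :
    ∀ m m', lo ≤ m → m ≤ m' → m' ≤ hi → (f m).2 s <:+ (f m').2 s := by
  intro m m'
  induction m' with
  | zero =>
    intro _ h2 _
    have h0 : m = 0 := by omega
    rw [h0]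
  | succ m' ih =>
    intro h1 h2 h3
    by_cases hmm : m ≤ m'
    · have ihm := ih h1 hmm (by omega)
      obtain ⟨x, hx⟩ := exists_letter m' (show m' < w.length by omega)
      have hst := hstep m' x hx
      rcases hkx : h.kind x with t | t | _
      · by_cases hts : t = s
        · subst hts
          obtain ⟨⟨g, _, hg⟩, _⟩ := step_call hkx hst
          rw [hg]
          exact ihm.trans (List.suffix_cons g _)
        · rw [(step_call hkx hst).2 s (fun hh => hts hh.symm)]; exact ihm
      · have hts : t ≠ s := by rintro rfl; exact hnr m' (by omega) (by omega) x hx hkx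
        rw [(step_ret hkx hst).1 s (fun hh => hts hh.symm)]; exact ihm
      · rw [congrFun (step_int hkx hst).2 s]; exact ihm
    · have hx1 : m = m' + 1 := by omega
      rw [hx1]

lemma stack_push
    (hstep : ∀ i a, w[i]? = some a → vStep h M a (f i) (f (i + 1)))
    (s : Fin K) (lo hi : ℕ) (hhi : hi ≤ w.length)
    (hcall : ∀ k, lo ≤ k → k < hi → ∀ x, w[k]? = some x → h.kind x = .call s) :
    ∀ m, lo ≤ m → m ≤ hi →
      ((f m).2 s).length = ((f lo).2 s).length + (m - lo) ∧
      ∀ t, t ≠ s → (f m).2 t = (f lo).2 t := by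
  intro m
  induction m with
  | zero =>
    intro h1 _
    have h0 : lo = 0 := by omega
    subst h0
    exact ⟨by omega, fun t _ => rfl⟩
  | succ m ih =>
    intro h1 h2
    by_cases hlo : lo ≤ m
    · have ihm := ih hlo (by omega)
      obtain ⟨x, hx⟩ := exists_letter m (show m < w.length by omega)
      obtain ⟨⟨g, _, hg⟩, ho⟩ := step_call (hcall m hlo (by omega) x hx) (hstep m x hx)
      constructor
      · rw [hg]
        simp only [List.length_cons, ihm.1]
        omega
      · intro t ht
        rw [ho t ht, ihm.2 t ht]
    · have hx1 : lo = m + 1 := by omega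
      subst hx1
      exact ⟨by omega, fun t _ => rfl⟩

lemma stack_pop
    (hstep : ∀ i a, w[i]? = some a → vStep h M a (f i) (f (i + 1)))
    (s : Fin K) (lo hi : ℕ) (hhi : hi ≤ w.length)
    (hret : ∀ k, lo ≤ k → k < hi → ∀ x, w[k]? = some x → h.kind x = .ret s)
    (hlen : hi - lo ≤ ((f lo).2 s).length) :
    ∀ m, lo ≤ m → m ≤ hi →
      (f m).2 s = ((f lo).2 s).drop (m - lo) ∧
      ∀ t, t ≠ s → (f m).2 t = (f lo).2 t := by
  intro m
  induction m with
  | zero =>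
    intro h1 _
    have h0 : lo = 0 := by omega
    subst h0
    exact ⟨by simp, fun t _ => rfl⟩
  | succ m ih =>
    intro h1 h2
    by_cases hlo : lo ≤ m
    · have ihm := ih hlo (by omega)
      obtain ⟨x, hx⟩ := exists_letter m (show m < w.length by omega)
      rcases step_ret (hret m hlo (by omega) x hx) (hstep m x hx) with ⟨ho, hre⟩
      rcases hre with ⟨g, _, hg⟩ | ⟨_, h1', _⟩
      · constructor
        · have : (f (m + 1)).2 s = ((f m).2 s).tail := by rw [hg]; rfl
          rw [this, ihm.1, List.tail_drop]
          congr 1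
          omega
        · intro t ht
          rw [ho t ht, ihm.2 t ht]
      · exfalso
        have hL := congrArg List.length (ihm.1.symm.trans h1')
        simp only [List.length_drop, List.length_nil] at hL
        omega
    · have hx1 : lo = m + 1 := by omega
      subst hx1
      exact ⟨by simp, fun t _ => rfl⟩

lemma pigeon [Fintype Q] (st : ℕ → Q) (off : ℕ) :
    ∃ i j, off ≤ i ∧ i < j ∧ j ≤ off + Fintype.card Q ∧ st i = st j := by
  obtain ⟨x, y, hxy, he⟩ := Fintype.exists_ne_map_eq_of_card_lt
    (fun k : Fin (Fintype.card Q + 1) => st (off + k)) (by simp)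
  rcases Nat.lt_or_ge x.1 y.1 with hlt | hge
  · exact ⟨off + x, off + y, by omega, by omega, by have := y.2; omega, he⟩
  · have hlt : y.1 < x.1 := by
      rcases Nat.lt_or_ge y.1 x.1 with hh | hh
      · exact hh
      · exact absurd (Fin.ext (by omega)) hxy
    exact ⟨off + y, off + x, by omega, by omega, by have := x.2; omega, he.symm⟩

end Stmt11Aux
namespace Stmt11Aux

/-- The word `aⁿbⁿcⁿ`. -/
def w3 (n : ℕ) : List L3abc :=
  List.replicate n L3abc.a ++ List.replicate n L3abc.b ++ List.replicate n L3abc.c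

lemma w3_length (n : ℕ) : (w3 n).length = 3 * n := by
  simp [w3]; omega

lemma w3_get_a {n k : ℕ} (hk : k < n) : (w3 n)[k]? = some L3abc.a := by
  rw [w3, List.getElem?_append_left (by simp; omega),
    List.getElem?_append_left (by simpa using hk),
    List.getElem?_eq_getElem (by simpa using hk)]
  simp

lemma w3_get_b {n k : ℕ} (h1 : n ≤ k) (h2 : k < 2 * n) : (w3 n)[k]? = some L3abc.b := by
  rw [w3, List.getElem?_append_left (by simp; omega),
    List.getElem?_append_right (by simpa using h1),
    List.getElem?_eq_getElem (by simp; omega)]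
  simp

lemma w3_get_c {n k : ℕ} (h1 : 2 * n ≤ k) (h2 : k < 3 * n) : (w3 n)[k]? = some L3abc.c := by
  rw [w3, List.getElem?_append_right (by simp; omega),
    List.getElem?_eq_getElem (by simp; omega)]
  simp

lemma rep_rep {α : Type*} (a : α) (x y : ℕ) (L : List α) :
    List.replicate x a ++ (List.replicate y a ++ L) = List.replicate (x + y) a ++ L := by
  rw [← List.append_assoc, ← List.replicate_add]

lemma w3_spliceA {n p q : ℕ} (hpq : p ≤ q) (hq : q ≤ n) :
    (w3 n).take p ++ (w3 n).drop q =
      List.replicate (n - (q - p)) L3abc.a ++ List.replicate n L3abc.b ++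
        List.replicate n L3abc.c := by
  have h1 : (w3 n).take p = List.replicate p L3abc.a := by
    rw [w3, List.take_append_of_le_length (by simp; omega),
      List.take_append_of_le_length (by simp; omega), List.take_replicate,
      min_eq_left (by omega)]
  have h2 : (w3 n).drop q = List.replicate (n - q) L3abc.a ++
      (List.replicate n L3abc.b ++ List.replicate n L3abc.c) := by
    rw [w3, List.append_assoc, List.drop_append_of_le_length (by simp; omega),
      List.drop_replicate]
  rw [h1, h2, rep_rep, List.append_assoc]
  have h3 : p + (n - q) = n - (q - p) := by omega
  rw [h3]

lemma w3_spliceB {n p q : ℕ} (hp : n ≤ p) (hpq : p ≤ q) (hq : q ≤ 2 * n) :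
    (w3 n).take p ++ (w3 n).drop q =
      List.replicate n L3abc.a ++ List.replicate (n - (q - p)) L3abc.b ++
        List.replicate n L3abc.c := by
  have h1 : (w3 n).take p =
      List.replicate n L3abc.a ++ List.replicate (p - n) L3abc.b := by
    rw [w3, List.append_assoc, List.take_append, List.take_replicate,
      min_eq_right (by omega), List.length_replicate,
      List.take_append_of_le_length (by simp; omega), List.take_replicate,
      min_eq_left (by omega)]
  have h2 : (w3 n).drop q =
      List.replicate (2 * n - q) L3abc.b ++ List.replicate n L3abc.c := by
    rw [w3, List.append_assoc, List.drop_append, List.drop_replicate,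
      List.length_replicate]
    have hn : n - q = 0 := by omega
    rw [hn, List.replicate_zero, List.nil_append,
      List.drop_append_of_le_length (by simp; omega), List.drop_replicate]
    have hn2 : n - (q - n) = 2 * n - q := by omega
    rw [hn2]
  rw [h1, h2, List.append_assoc, rep_rep, ← List.append_assoc]
  have h3 : p - n + (2 * n - q) = n - (q - p) := by omega
  rw [h3]

lemma w3_spliceC {n p q : ℕ} (hp : 2 * n ≤ p) (hpq : p ≤ q) (hq : q ≤ 3 * n) :
    (w3 n).take p ++ (w3 n).drop q =
      List.replicate n L3abc.a ++ List.replicate n L3abc.b ++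
        List.replicate (n - (q - p)) L3abc.c := by
  have h1 : (w3 n).take p = List.replicate n L3abc.a ++ List.replicate n L3abc.b ++
      List.replicate (p - 2 * n) L3abc.c := by
    rw [w3, List.take_append]
    have hl : (List.replicate n L3abc.a ++ List.replicate n L3abc.b).length = 2 * n := by
      simp; omega
    rw [List.take_of_length_le (by omega : (List.replicate n L3abc.a ++ List.replicate n L3abc.b).length ≤ p),
      hl, List.take_replicate, min_eq_left (by omega)]
  have h2 : (w3 n).drop q = List.replicate (3 * n - q) L3abc.c := by
    rw [w3, List.drop_append]
    have hl : (List.replicate n L3abc.a ++ List.replicate n L3abc.b).length = 2 * n := by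
      simp; omega
    rw [List.drop_of_length_le (by omega : (List.replicate n L3abc.a ++ List.replicate n L3abc.b).length ≤ q),
      hl, List.nil_append, List.drop_replicate]
    have hn : n - (q - 2 * n) = 3 * n - q := by omega
    rw [hn]
  rw [h1, h2, List.append_assoc, List.append_assoc, ← List.replicate_add]
  have h3 : p - 2 * n + (3 * n - q) = n - (q - p) := by omega
  rw [h3, List.append_assoc]

lemma rep3_eq {x y z m : ℕ}
    (he : List.replicate x L3abc.a ++ List.replicate y L3abc.b ++ List.replicate z L3abc.c =
      List.replicate m L3abc.a ++ List.replicate m L3abc.b ++ List.replicate m L3abc.c) :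
    x = m ∧ y = m ∧ z = m := by
  refine ⟨?_, ?_, ?_⟩
  · have := congrArg (List.count L3abc.a) he
    simpa [List.count_append, List.count_replicate] using this
  · have := congrArg (List.count L3abc.b) he
    simpa [List.count_append, List.count_replicate] using this
  · have := congrArg (List.count L3abc.c) he
    simpa [List.count_append, List.count_replicate] using this

end Stmt11Aux
namespace Stmt11Aux

lemma pump {K : ℕ} {Q Γ : Type} [Fintype Q] {h : CRAlphabet K L3abc} {M : MVPA K L3abc Q Γ}
    {n : ℕ} (hn : n = Fintype.card Q + 1)
    {f : ℕ → Q × (Fin K → List Γ)}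
    (h0I : (f 0).1 ∈ M.qI) (h0S : ∀ s, (f 0).2 s = [])
    (hstep : ∀ i a, (w3 n)[i]? = some a → vStep h M a (f i) (f (i + 1)))
    (hF : (f (w3 n).length).1 ∈ M.qF)
    (off : ℕ) (hoff : off = 0 ∨ off = n ∨ off = 2 * n)
    (hcond : ∀ p q, off ≤ p → p ≤ q → q ≤ off + n →
      ∀ s : Fin K, (f p).2 s = (f q).2 s ∨
        ((∀ m, q ≤ m → m ≤ (w3 n).length → (f q).2 s <:+ (f m).2 s) ∧
          (f p).2 s <:+ (f q).2 s))
    (heq : vLang h M = {w | ∃ m, 1 ≤ m ∧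
      w = List.replicate m L3abc.a ++ List.replicate m L3abc.b ++
        List.replicate m L3abc.c}) :
    False := by
  obtain ⟨p, q, hp, hpq, hq, hst⟩ := pigeon (fun m => (f m).1) off
  have hw3l : (w3 n).length = 3 * n := w3_length n
  have hqon : q ≤ off + n := by omega
  have hq3 : q ≤ (w3 n).length := by
    rw [hw3l]; rcases hoff with rfl | rfl | rfl <;> omega
  have hacc := splice (w3 n) f h0I h0S hstep hF p q (le_of_lt hpq) hq3 hst
    (hcond p q hp (le_of_lt hpq) hqon)
  have hd1 : 1 ≤ q - p := by omega
  have hdn : q - p ≤ n := by omega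
  have hne : (w3 n).take p ++ (w3 n).drop q ≠ [] := by
    intro hnil
    have := congrArg List.length hnil
    simp only [List.length_append, List.length_take, List.length_drop, hw3l,
      List.length_nil] at this
    rcases hoff with rfl | rfl | rfl <;> omega
  have hmem : (w3 n).take p ++ (w3 n).drop q ∈ vLang h M := ⟨hne, hacc⟩
  rw [heq] at hmem
  obtain ⟨m, hm1, hm⟩ := hmem
  rcases hoff with rfl | rfl | rfl
  · rw [w3_spliceA (le_of_lt hpq) (by omega)] at hm
    obtain ⟨e1, e2, -⟩ := rep3_eq hm
    omega
  · rw [w3_spliceB (by omega) (le_of_lt hpq) (by omega)] at hm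
    obtain ⟨e1, e2, -⟩ := rep3_eq hm
    omega
  · rw [w3_spliceC (by omega) (le_of_lt hpq) (by omega)] at hm
    obtain ⟨e1, -, e3⟩ := rep3_eq hm
    omega

end Stmt11Aux

open Stmt11Aux in

/-- no multi-stack visibly pushdown automaton recognizes
`{aⁿbⁿcⁿ | n ≥ 1}`, regardless of the choice of the `K`-stack call-return
alphabet partitioning `{a,b,c}`. -/
theorem stmt11 (K : ℕ) (h : CRAlphabet K L3abc) (Q Γ : Type)
    [Fintype Q] [Fintype Γ] (M : MVPA K L3abc Q Γ) :
    vLang h M ≠ {w | ∃ n, 1 ≤ n ∧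
      w = List.replicate n L3abc.a ++ List.replicate n L3abc.b ++
        List.replicate n L3abc.c} := by
  classical
  intro heq
  set n := Fintype.card Q + 1 with hn
  have hnpos : 1 ≤ n := by omega
  have hwmem : w3 n ∈ vLang h M := by
    rw [heq]
    exact ⟨n, hnpos, rfl⟩
  obtain ⟨-, f, h0I, h0S, hstep, hF⟩ := hwmem
  have hw3l : (w3 n).length = 3 * n := w3_length n
  -- letters
  have hlA : ∀ k, k < n → ∀ x : L3abc, (w3 n)[k]? = some x → x = L3abc.a := by
    intro k hk x hx
    rw [w3_get_a hk] at hx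
    exact (Option.some.inj hx).symm
  have hlB : ∀ k, n ≤ k → k < 2 * n → ∀ x : L3abc, (w3 n)[k]? = some x → x = L3abc.b := by
    intro k h1 h2 x hx
    rw [w3_get_b h1 h2] at hx
    exact (Option.some.inj hx).symm
  have hlC : ∀ k, 2 * n ≤ k → k < 3 * n → ∀ x : L3abc, (w3 n)[k]? = some x → x = L3abc.c := by
    intro k h1 h2 x hx
    rw [w3_get_c h1 h2] at hx
    exact (Option.some.inj hx).symm
  -- a generic way to conclude from constant stacks on a block
  have pumpConst : ∀ off : ℕ, (off = 0 ∨ off = n ∨ off = 2 * n) →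
      (∀ m, off ≤ m → m ≤ off + n → (f m).2 = (f off).2) → False := by
    intro off hoff hconst
    refine pump hn h0I h0S hstep hF off hoff ?_ heq
    intro p q hp hpq hq s
    exact Or.inl (by rw [congrFun (hconst p hp (by omega)) s,
      congrFun (hconst q (by omega) hq) s])
  -- a generic way to conclude from all-stacks-monotone on the c-block
  have pumpMonoC : (∀ s : Fin K, ∀ m m', 2 * n ≤ m → m ≤ m' → m' ≤ 3 * n →
      (f m).2 s <:+ (f m').2 s) → False := by
    intro hmono
    refine pump hn h0I h0S hstep hF (2 * n) (Or.inr (Or.inr rfl)) ?_ heq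
    intro p q hp hpq hq s
    refine Or.inr ⟨?_, hmono s p q hp hpq (by omega)⟩
    intro m hm hm3
    rw [hw3l] at hm3
    exact hmono s q m (by omega) hm hm3
  rcases hka : h.kind L3abc.a with s1 | s1 | _
  rotate_left
  · -- a is a return: all stacks stay empty on the a-block
    exact pumpConst 0 (Or.inl rfl)
      (fun m h1 h2 => stacks_const_retEmpty hstep s1 0 n (by omega)
        (fun k _ hk x hx => by rw [hlA k hk x hx]; exact hka) (h0S s1) m h1 (by omega))
  · -- a is internal
    exact pumpConst 0 (Or.inl rfl)
      (fun m h1 h2 => stacks_const_int hstep 0 n (by omega)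
        (fun k _ hk x hx => by rw [hlA k hk x hx]; exact hka) m h1 (by omega))
  -- a is a call of stack s1
  have hpushA := stack_push hstep s1 0 n (by omega)
    (fun k _ hk x hx => by rw [hlA k hk x hx]; exact hka)
  have hlenFn : ((f n).2 s1).length = n := by
    have := (hpushA n (by omega) le_rfl).1
    rw [h0S s1] at this
    simpa using this
  rcases hkb : h.kind L3abc.b with t | t | _
  rotate_left
  · -- b is a return of stack t
    by_cases ht1 : t = s1
    · rw [ht1] at hkb
      -- b pops stack s1; after the b-block every stack is empty
      have hdropB := stack_pop hstep s1 n (2 * n) (by omega)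
        (fun k h1 h2 x hx => by rw [hlB k h1 h2 x hx]; exact hkb)
        (by rw [hlenFn]; omega)
      have hemp2n : ∀ s, (f (2 * n)).2 s = [] := by
        intro s
        by_cases hss : s = s1
        · rw [hss, (hdropB (2 * n) (by omega) le_rfl).1]
          exact List.drop_eq_nil_of_le (by rw [hlenFn]; omega)
        · rw [(hdropB (2 * n) (by omega) le_rfl).2 s hss]
          exact stack_empty_upto hstep s n (by omega)
            (fun k hk x hx => by
              rw [hlA k hk x hx, hka]
              exact fun hcc => hss (CRKind.call.inj hcc).symm)
            (h0S s) n le_rfl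
      rcases hkc : h.kind L3abc.c with u | s3 | _
      · -- c is a call: the c-block only pushes
        refine pumpMonoC (fun s => stack_mono hstep s (2 * n) (3 * n) (by omega) ?_)
        intro k h1 h2 x hx
        rw [hlC k h1 h2 x hx, hkc]
        exact fun hcc => by cases hcc
      · -- c is a return of s3, but stack s3 is empty after the b-block
        exact pumpConst (2 * n) (Or.inr (Or.inr rfl))
          (fun m h1 h2 => stacks_const_retEmpty hstep s3 (2 * n) (3 * n) (by omega)
            (fun k h1' h2' x hx => by rw [hlC k h1' h2' x hx]; exact hkc)
            (hemp2n s3) m h1 (by omega))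
      · -- c is internal
        exact pumpConst (2 * n) (Or.inr (Or.inr rfl))
          (fun m h1 h2 => stacks_const_int hstep (2 * n) (3 * n) (by omega)
            (fun k h1' h2' x hx => by rw [hlC k h1' h2' x hx]; exact hkc)
            m h1 (by omega))
    · -- b pops a stack t ≠ s1 which is always empty during the b-block
      have hempt : (f n).2 t = [] :=
        stack_empty_upto hstep t n (by omega)
          (fun k hk x hx => by
            rw [hlA k hk x hx, hka]
            exact fun hcc => ht1 (CRKind.call.inj hcc).symm)
          (h0S t) n le_rfl
      exact pumpConst n (Or.inr (Or.inl rfl))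
        (fun m h1 h2 => stacks_const_retEmpty hstep t n (2 * n) (by omega)
          (fun k h1' h2' x hx => by rw [hlB k h1' h2' x hx]; exact hkb)
          hempt m h1 (by omega))
  · -- b is internal
    exact pumpConst n (Or.inr (Or.inl rfl))
      (fun m h1 h2 => stacks_const_int hstep n (2 * n) (by omega)
        (fun k h1' h2' x hx => by rw [hlB k h1' h2' x hx]; exact hkb)
        m h1 (by omega))
  -- b is a call of stack t
  rcases hkc : h.kind L3abc.c with u | s3 | _
  rotate_left
  · -- c is a return of stack s3
    by_cases h31 : s3 = s1
    · rw [h31] at hkc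
      by_cases h3t : t = s1
      · rw [h3t] at hkb
        -- the hard case: a, b push s1, c pops s1; pump the a-block
        have hpushB := stack_push hstep s1 n (2 * n) (by omega)
          (fun k h1 h2 x hx => by rw [hlB k h1 h2 x hx]; exact hkb)
        have hlen2n : ((f (2 * n)).2 s1).length = 2 * n := by
          have := (hpushB (2 * n) (by omega) le_rfl).1
          rw [hlenFn] at this
          omega
        have hmono2 : ∀ m m', m ≤ m' → m' ≤ 2 * n → (f m).2 s1 <:+ (f m').2 s1 := by
          intro m m' h1 h2
          refine stack_mono hstep s1 0 (2 * n) (by omega) ?_ m m' (by omega) h1 h2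
          intro k _ hk x hx
          by_cases hkn : k < n
          · rw [hlA k hkn x hx, hka]
            exact fun hcc => by cases hcc
          · rw [hlB k (by omega) (by omega) x hx, hkb]
            exact fun hcc => by cases hcc
        have hdropC := stack_pop hstep s1 (2 * n) (3 * n) (by omega)
          (fun k h1 h2 x hx => by rw [hlC k h1 h2 x hx]; exact hkc)
          (by rw [hlen2n]; omega)
        have hsufn : ∀ m, 2 * n ≤ m → m ≤ 3 * n → (f n).2 s1 <:+ (f m).2 s1 := by
          intro m h1 h2
          obtain ⟨Y, hY⟩ := hmono2 n (2 * n) (by omega) le_rfl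
          have hYlen : Y.length = n := by
            have := congrArg List.length hY
            rw [hlen2n] at this
            simp only [List.length_append, hlenFn] at this
            omega
          rw [(hdropC m h1 h2).1, ← hY,
            List.drop_append_of_le_length (by omega : m - 2 * n ≤ Y.length)]
          exact List.suffix_append _ _
        refine pump hn h0I h0S hstep hF 0 (Or.inl rfl) ?_ heq
        intro p q hp hpq hq s
        by_cases hss : s = s1
        · subst hss
          refine Or.inr ⟨?_, hmono2 p q hpq (by omega)⟩
          intro m hm hm3
          rw [hw3l] at hm3
          by_cases hm2 : m ≤ 2 * n
          · exact hmono2 q m hm hm2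
          · exact (hmono2 q n (by omega) (by omega)).trans
              (hsufn m (by omega) hm3)
        · exact Or.inl (by rw [(hpushA p hp (by omega)).2 s hss,
            (hpushA q (by omega) (by omega)).2 s hss])
      · -- b pushes t ≠ s1, which is never popped; pump the b-block
        have hmonoT : ∀ m m', m ≤ m' → m' ≤ 3 * n → (f m).2 t <:+ (f m').2 t := by
          intro m m' h1 h2
          refine stack_mono hstep t 0 (3 * n) (by omega) ?_ m m' (by omega) h1 h2
          intro k _ hk x hx
          by_cases hkn : k < n
          · rw [hlA k hkn x hx, hka]
            exact fun hcc => by cases hcc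
          by_cases hkn2 : k < 2 * n
          · rw [hlB k (by omega) hkn2 x hx, hkb]
            exact fun hcc => by cases hcc
          · rw [hlC k (by omega) (by omega) x hx, hkc]
            exact fun hcc => h3t (CRKind.ret.inj hcc).symm
        have hpushB := stack_push hstep t n (2 * n) (by omega)
          (fun k h1 h2 x hx => by rw [hlB k h1 h2 x hx]; exact hkb)
        refine pump hn h0I h0S hstep hF n (Or.inr (Or.inl rfl)) ?_ heq
        intro p q hp hpq hq s
        by_cases hss : s = t
        · subst hss
          refine Or.inr ⟨?_, hmonoT p q hpq (by omega)⟩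
          intro m hm hm3
          rw [hw3l] at hm3
          exact hmonoT q m hm hm3
        · exact Or.inl (by rw [(hpushB p hp (by omega)).2 s hss,
            (hpushB q (by omega) (by omega)).2 s hss])
    · by_cases h3t : s3 = t
      · rw [h3t] at hkc
        -- a pushes s1, never popped (c pops t ≠ s1); pump the a-block
        have hmono1 : ∀ m m', m ≤ m' → m' ≤ 3 * n → (f m).2 s1 <:+ (f m').2 s1 := by
          intro m m' h1 h2
          refine stack_mono hstep s1 0 (3 * n) (by omega) ?_ m m' (by omega) h1 h2
          intro k _ hk x hx
          by_cases hkn : k < n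
          · rw [hlA k hkn x hx, hka]
            exact fun hcc => by cases hcc
          by_cases hkn2 : k < 2 * n
          · rw [hlB k (by omega) hkn2 x hx, hkb]
            exact fun hcc => by cases hcc
          · rw [hlC k (by omega) (by omega) x hx, hkc]
            exact fun hcc => h31 (h3t.trans (CRKind.ret.inj hcc))
        refine pump hn h0I h0S hstep hF 0 (Or.inl rfl) ?_ heq
        intro p q hp hpq hq s
        by_cases hss : s = s1
        · subst hss
          refine Or.inr ⟨?_, hmono1 p q hpq (by omega)⟩
          intro m hm hm3
          rw [hw3l] at hm3
          exact hmono1 q m hm hm3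
        · exact Or.inl (by rw [(hpushA p hp (by omega)).2 s hss,
            (hpushA q (by omega) (by omega)).2 s hss])
      · -- stack s3 is never pushed before the c-block: it is empty there
        have hemp : (f (2 * n)).2 s3 = [] := by
          refine stack_empty_upto hstep s3 (2 * n) (by omega) ?_ (h0S s3) (2 * n) le_rfl
          intro k hk x hx
          by_cases hkn : k < n
          · rw [hlA k hkn x hx, hka]
            exact fun hcc => h31 (CRKind.call.inj hcc).symm
          · rw [hlB k (by omega) (by omega) x hx, hkb]
            exact fun hcc => h3t (CRKind.call.inj hcc).symm
        exact pumpConst (2 * n) (Or.inr (Or.inr rfl))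
          (fun m h1 h2 => stacks_const_retEmpty hstep s3 (2 * n) (3 * n) (by omega)
            (fun k h1' h2' x hx => by rw [hlC k h1' h2' x hx]; exact hkc)
            hemp m h1 (by omega))
  · -- c is internal
    exact pumpConst (2 * n) (Or.inr (Or.inr rfl))
      (fun m h1 h2 => stacks_const_int hstep (2 * n) (3 * n) (by omega)
        (fun k h1' h2' x hx => by rw [hlC k h1' h2' x hx]; exact hkc)
        m h1 (by omega))
  · -- c is a call: the c-block only pushes
    refine pumpMonoC (fun s => stack_mono hstep s (2 * n) (3 * n) (by omega) ?_)
    intro k h1 h2 x hx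
    rw [hlC k h1 h2 x hx, hkc]
    exact fun hcc => by cases hcc
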